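/- Let I be a monomial ideal of A with M(I) finite, and suppose there exist vertices a, b ∈ M(I) that are not reachable from one another in G(I), each of which either is adjacent to some vertex of G(I) or equals e_t for some t with X_t^2 ∉ I (i.e. the survival complex contains two distinct nontrivial or quasi-trivially connected components). Then the survival complex contains at least two truly isolated points: there exist distinct p, q ∈ M(I) such that X_i·X^p ∈ I and X_i·X^q ∈ I for every i. -/

import Mathlib

open MvPolynomial

/-- An ideal of `k[X_1,…,X_n]` is a *monomial ideal* if it is generated by a set
of monomials. -/
def IsMonomialIdeal {k : Type*} [Field k] {n : ℕ}
    (I : Ideal (MvPolynomial (Fin n) k)) : Prop :=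
  ∃ S : Set ((Fin n) →₀ ℕ),
    I = Ideal.span ((fun a => (monomial a (1 : k) : MvPolynomial (Fin n) k)) '' S)

/-- `M(I)`: the vertices of the survival complex of `A/I`. -/
def survivors {k : Type*} [Field k] {n : ℕ}
    (I : Ideal (MvPolynomial (Fin n) k)) : Set ((Fin n) →₀ ℕ) :=
  {a | a ≠ 0 ∧ monomial a (1 : k) ∉ I}

/-- The survival graph `G(I)`: distinct vertices `a, b ∈ M(I)` are adjacent iff
`X^{a+b} ∉ I` (the 1-skeleton of the survival complex). -/
def survGraph {k : Type*} [Field k] {n : ℕ}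
    (I : Ideal (MvPolynomial (Fin n) k)) : SimpleGraph ((Fin n) →₀ ℕ) where
  Adj a b := a ≠ b ∧ a ∈ survivors I ∧ b ∈ survivors I ∧ monomial (a + b) (1 : k) ∉ I
  symm := by
    constructor
    rintro a b ⟨h1, h2, h3, h4⟩
    exact ⟨h1.symm, h3, h2, by rwa [add_comm]⟩
  loopless := by
    constructor
    rintro a ⟨h1, -⟩
    exact h1 rfl

section Aux

variable {k : Type*} [Field k] {n : ℕ} (I : Ideal (MvPolynomial (Fin n) k))

lemma aux_mono {u v : (Fin n) →₀ ℕ} (h : u ≤ v)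
    (hu : monomial u (1 : k) ∈ I) : monomial v (1 : k) ∈ I := by
  obtain ⟨w, rfl⟩ := le_iff_exists_add.mp h
  have : (monomial (u + w) (1 : k) : MvPolynomial (Fin n) k)
      = monomial w 1 * monomial u 1 := by
    rw [monomial_mul, one_mul, add_comm]
  rw [this]
  exact I.mul_mem_left _ hu

lemma aux_notmem {u v : (Fin n) →₀ ℕ} (h : u ≤ v)
    (hv : monomial v (1 : k) ∉ I) : monomial u (1 : k) ∉ I :=
  fun hu => hv (aux_mono I h hu)

lemma aux_reach {x y : (Fin n) →₀ ℕ} (hx : x ≠ 0) (hy : y ≠ 0)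
    (h : monomial (x + y) (1 : k) ∉ I) : (survGraph I).Reachable x y := by
  by_cases hxy : x = y
  · subst hxy; exact SimpleGraph.Reachable.refl x
  · exact SimpleGraph.Adj.reachable
      ⟨hxy, ⟨hx, aux_notmem I le_self_add h⟩, ⟨hy, aux_notmem I le_add_self h⟩, h⟩

lemma aux_add_ne {n : ℕ} {c d : (Fin n) →₀ ℕ} (hc : c ≠ 0) : c + d ≠ 0 := by
  intro h0
  apply hc
  ext j
  have := DFunLike.congr_fun h0 j
  simp only [Finsupp.add_apply, Finsupp.coe_zero, Pi.zero_apply] at this ⊢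
  omega

/-- Total degree of an exponent vector. -/
def expDeg {n : ℕ} (u : (Fin n) →₀ ℕ) : ℕ := u.sum fun _ e => e

lemma expDeg_add {n : ℕ} (u v : (Fin n) →₀ ℕ) :
    expDeg (u + v) = expDeg u + expDeg v :=
  Finsupp.sum_add_index' (fun _ => rfl) (fun _ _ _ => rfl)

lemma expDeg_single {n : ℕ} (i : Fin n) : expDeg (Finsupp.single i 1) = 1 :=
  Finsupp.sum_single_index rfl

/-- In every "nontrivial or quasi-trivially connected" component there is a
truly isolated point, of the form `c + d` with `c, d` reachable from `a`. -/
lemma exists_ti (hfin : (survivors I).Finite)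
    (a : (Fin n) →₀ ℕ) (ha : a ∈ survivors I)
    (hnontriv : (∃ v, (survGraph I).Adj a v) ∨
      ∃ t : Fin n, a = Finsupp.single t 1 ∧
        monomial (Finsupp.single t 2) (1 : k) ∉ I) :
    ∃ c d : (Fin n) →₀ ℕ, c ≠ 0 ∧ d ≠ 0 ∧
      (survGraph I).Reachable a c ∧ (survGraph I).Reachable a d ∧
      monomial (c + d) (1 : k) ∉ I ∧
      ∀ i : Fin n, monomial (c + d + Finsupp.single i 1) (1 : k) ∈ I := by
  set T : Set ((Fin n) →₀ ℕ) :=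
    {s | (∃ c d : (Fin n) →₀ ℕ, c ≠ 0 ∧ d ≠ 0 ∧
      (survGraph I).Reachable a c ∧ (survGraph I).Reachable a d ∧ s = c + d) ∧
      monomial s (1 : k) ∉ I} with hT
  have hTsub : T ⊆ survivors I := by
    rintro s ⟨⟨c, d, hc, hd, _, _, rfl⟩, hs⟩
    exact ⟨aux_add_ne hc, hs⟩
  have hTfin : T.Finite := hfin.subset hTsub
  have hTne : T.Nonempty := by
    rcases hnontriv with ⟨v, hadj⟩ | ⟨t, rfl, h2⟩
    · exact ⟨a + v, ⟨a, v, ha.1, hadj.2.2.1.1, SimpleGraph.Reachable.refl a,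
        hadj.reachable, rfl⟩, hadj.2.2.2⟩
    · refine ⟨Finsupp.single t 1 + Finsupp.single t 1,
        ⟨Finsupp.single t 1, Finsupp.single t 1, ha.1, ha.1,
          SimpleGraph.Reachable.refl _, SimpleGraph.Reachable.refl _, rfl⟩, ?_⟩
      rwa [← Finsupp.single_add]
  obtain ⟨p, hpT, hpmax⟩ := Set.Finite.exists_maximalFor expDeg T hTfin hTne
  obtain ⟨⟨c, d, hc, hd, hac, had, rfl⟩, hpI⟩ := hpT
  refine ⟨c, d, hc, hd, hac, had, hpI, fun i => ?_⟩
  by_contra hni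
  have hkey : c + d + Finsupp.single i 1 ∈ T := by
    have heq : c + d + Finsupp.single i 1 = (c + Finsupp.single i 1) + d := by
      abel
    have hc' : c + Finsupp.single i 1 ≠ 0 := aux_add_ne hc
    have hreach : (survGraph I).Reachable a (c + Finsupp.single i 1) := by
      refine had.trans (aux_reach I hd hc' ?_)
      rwa [show d + (c + Finsupp.single i 1) = c + d + Finsupp.single i 1 by abel]
    exact ⟨⟨c + Finsupp.single i 1, d, hc', hd, hreach, had, heq⟩, hni⟩
  have := hpmax hkey (by
    simp only [expDeg_add, expDeg_single]; omega)
  simp only [expDeg_add, expDeg_single] at this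
  omega

end Aux

/-- If the survival complex contains two distinct nontrivial or quasi-trivially
connected components, then it contains at least two truly isolated points. -/
theorem two_components_two_truly_isolated
    {k : Type*} [Field k] {n : ℕ} (hn : 1 ≤ n)
    (I : Ideal (MvPolynomial (Fin n) k)) (hI : IsMonomialIdeal I)
    (hfin : (survivors I).Finite)
    (a b : (Fin n) →₀ ℕ) (ha : a ∈ survivors I) (hb : b ∈ survivors I)
    (hsep : ¬ (survGraph I).Reachable a b)
    (hanontriv : (∃ v, (survGraph I).Adj a v) ∨
      ∃ t : Fin n, a = Finsupp.single t 1 ∧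
        monomial (Finsupp.single t 2) (1 : k) ∉ I)
    (hbnontriv : (∃ v, (survGraph I).Adj b v) ∨
      ∃ t : Fin n, b = Finsupp.single t 1 ∧
        monomial (Finsupp.single t 2) (1 : k) ∉ I) :
    ∃ p ∈ survivors I, ∃ q ∈ survivors I, p ≠ q ∧
      (∀ i : Fin n, X i * monomial p (1 : k) ∈ I) ∧
      (∀ i : Fin n, X i * monomial q (1 : k) ∈ I) := by
  obtain ⟨c, d, hc, hd, hac, had, hpI, hpt⟩ := exists_ti I hfin a ha hanontriv
  obtain ⟨c', d', hc', hd', hbc, hbd, hqI, hqt⟩ := exists_ti I hfin b hb hbnontriv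
  have hcd0 : c + d ≠ 0 := aux_add_ne hc
  have hcd0' : c' + d' ≠ 0 := aux_add_ne hc'
  have hXmul : ∀ (p : (Fin n) →₀ ℕ) (i : Fin n),
      X i * monomial p (1 : k) = monomial (p + Finsupp.single i 1) (1 : k) := by
    intro p i
    rw [X, monomial_mul, one_mul, add_comm]
  refine ⟨c + d, ⟨hcd0, hpI⟩, c' + d', ⟨hcd0', hqI⟩, ?_,
    fun i => by rw [hXmul]; exact hpt i, fun i => by rw [hXmul]; exact hqt i⟩
  -- It remains to show the two truly isolated points are distinct.
  intro heq
  apply hsep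
  -- values agree coordinatewise
  have hval : ∀ j, c j + d j = c' j + d' j := by
    intro j
    have := DFunLike.congr_fun heq j
    simpa using this
  by_cases hu0 : c ⊓ d' = 0
  · -- c and d' have disjoint supports, hence c ≤ c', so c—d' is an edge
    have hcle : c + d' ≤ c' + d' := by
      rw [Finsupp.le_def]
      intro j
      have h1 : c j ⊓ d' j = 0 := by
        rw [← Finsupp.inf_apply, hu0]; rfl
      have := hval j
      simp only [Finsupp.add_apply]
      omega
    have : monomial (c + d') (1 : k) ∉ I := aux_notmem I hcle hqI
    exact (hac.trans (aux_reach I hc hd' this)).trans hbd.symm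
  · by_cases hv0 : d ⊓ c' = 0
    · -- d and c' have disjoint supports, hence d ≤ d', so d—c' is an edge
      have hdle : d + c' ≤ c' + d' := by
        rw [Finsupp.le_def]
        intro j
        have h1 : d j ⊓ c' j = 0 := by
          rw [← Finsupp.inf_apply, hv0]; rfl
        have := hval j
        simp only [Finsupp.add_apply]
        omega
      have : monomial (d + c') (1 : k) ∉ I := aux_notmem I hdle hqI
      exact (had.trans (aux_reach I hd hc' this)).trans hbc.symm
    · -- path d — (c ⊓ d') — (d ⊓ c') — d'
      set u := c ⊓ d' with hu
      set v := d ⊓ c' with hv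
      have h1 : d + u ≤ c + d := by
        rw [Finsupp.le_def]
        intro j
        have : u j = c j ⊓ d' j := Finsupp.inf_apply _ _ _
        simp only [Finsupp.add_apply, this]
        omega
      have h2 : u + v ≤ c + d := by
        rw [Finsupp.le_def]
        intro j
        have hu' : u j = c j ⊓ d' j := Finsupp.inf_apply _ _ _
        have hv' : v j = d j ⊓ c' j := Finsupp.inf_apply _ _ _
        have := hval j
        simp only [Finsupp.add_apply, hu', hv']
        omega
      have h3 : v + d' ≤ c' + d' := by
        rw [Finsupp.le_def]
        intro j
        have hv' : v j = d j ⊓ c' j := Finsupp.inf_apply _ _ _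
        simp only [Finsupp.add_apply, hv']
        omega
      have m1 : monomial (d + u) (1 : k) ∉ I := aux_notmem I h1 hpI
      have m2 : monomial (u + v) (1 : k) ∉ I := aux_notmem I h2 hpI
      have m3 : monomial (v + d') (1 : k) ∉ I := aux_notmem I h3 hqI
      exact (((had.trans (aux_reach I hd hu0 m1)).trans
        (aux_reach I hu0 hv0 m2)).trans (aux_reach I hv0 hd' m3)).trans hbd.symm
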